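/- Let s>1 be non-integer, write s=k+σ with k∈ℕ and 0<σ<1, and let d∈ℕ. Let Ω₁,Ω₂⊂ℝ^d be bounded Lipschitz domains. Let f₁:Ω₁→ℝ^d be bi-Lipschitz with f₁(Ω₁)⊆Ω₂ and with each component in C^s(Ω₁), and let f₂∈C^s(Ω₂) be ℂ-valued. Then f₂∘f₁∈C^s(Ω₁). -/

import Mathlib

open MeasureTheory Metric Set
open scoped ENNReal

noncomputable section

/-- The last coordinate index of `Fin d`, for `0 < d`. -/
def lastIdx (d : ℕ) (hd : 0 < d) : Fin d := ⟨d - 1, by omega⟩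

/-- `Ω ⊂ ℝ^d` is a bounded `(δ,R)`-Lipschitz domain: near every boundary point, after a
translation sending the point to the origin and a rotation, `Ω` coincides inside the cube
`Q(0,R)` with the supergraph (in the last coordinate) of a `δ`-Lipschitz function of the
remaining coordinates, supported in `[-4R,4R]^{d-1}`. -/
def IsLipDomainD {d : ℕ} (hd : 0 < d) (δ R : ℝ)
    (Ω : Set (EuclideanSpace ℝ (Fin d))) : Prop :=
  IsOpen Ω ∧ IsConnected Ω ∧ Bornology.IsBounded Ω ∧
  ∀ z ∈ frontier Ω,
    ∃ g : EuclideanSpace ℝ (Fin d) ≃ₗᵢ[ℝ] EuclideanSpace ℝ (Fin d),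
    ∃ A : EuclideanSpace ℝ (Fin d) → ℝ,
      LipschitzWith (Real.toNNReal δ) A ∧
      (∀ x y : EuclideanSpace ℝ (Fin d),
        (∀ i : Fin d, i ≠ lastIdx d hd → x i = y i) → A x = A y) ∧
      (∀ x : EuclideanSpace ℝ (Fin d),
        (∃ i : Fin d, i ≠ lastIdx d hd ∧ 4 * R < |x i|) → A x = 0) ∧
      ((fun w => g (w - z)) '' Ω) ∩ {x | ∀ i : Fin d, |x i| < R}
        = {x | (∀ i : Fin d, |x i| < R) ∧ A x < x (lastIdx d hd)}

/-- `f ∈ C^{k+σ}(U)`: `f` is `k` times continuously differentiable on `U`, its derivatives up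
to order `k` are bounded on `U`, and its `k`-th derivative is `σ`-Hölder on `U`. -/
def MemHolderCs {E F : Type*} [NormedAddCommGroup E] [NormedSpace ℝ E]
    [NormedAddCommGroup F] [NormedSpace ℝ F]
    (k : ℕ) (σ : ℝ) (U : Set E) (f : E → F) : Prop :=
  ContDiffOn ℝ (k : ℕ∞) f U ∧
  (∀ i ≤ k, ∃ M : ℝ, ∀ x ∈ U, ‖iteratedFDerivWithin ℝ i f U x‖ ≤ M) ∧
  (∃ H : ℝ, ∀ x ∈ U, ∀ y ∈ U,
    ‖iteratedFDerivWithin ℝ k f U x - iteratedFDerivWithin ℝ k f U y‖ ≤ H * ‖x - y‖ ^ σ)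

set_option linter.unusedSectionVars false
set_option linter.unusedVariables false

theorem abs_coord_le_norm {d : ℕ} (u : EuclideanSpace ℝ (Fin d)) (i : Fin d) : |u i| ≤ ‖u‖ := by
  rw [EuclideanSpace.norm_eq]
  have h1 : |u i| = Real.sqrt (‖u i‖ ^ 2) := by
    rw [Real.sqrt_sq (norm_nonneg _), Real.norm_eq_abs]
  rw [h1]
  refine Real.sqrt_le_sqrt ?_
  exact Finset.single_le_sum (f := fun j => ‖u j‖ ^ 2) (fun j _ => by positivity)
    (Finset.mem_univ i)

theorem norm_le_of_coord {d : ℕ} (u v : EuclideanSpace ℝ (Fin d))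
    (h : ∀ i, |u i| ≤ |v i|) : ‖u‖ ≤ ‖v‖ := by
  rw [EuclideanSpace.norm_eq, EuclideanSpace.norm_eq]
  refine Real.sqrt_le_sqrt (Finset.sum_le_sum fun i _ => ?_)
  rw [Real.norm_eq_abs, Real.norm_eq_abs]
  exact pow_le_pow_left₀ (abs_nonneg _) (h i) 2

section Core
variable {E : Type} [NormedAddCommGroup E] [NormedSpace ℝ E]
variable {F : Type} [NormedAddCommGroup F] [NormedSpace ℝ F]
variable {G : Type} [NormedAddCommGroup G] [NormedSpace ℝ G]

/-- strengthened Hölder class: all derivatives up to `k` bounded and `σ`-Hölder. -/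
def SHol (k : ℕ) (σ : ℝ) (U : Set E) (f : E → F) : Prop :=
  ContDiffOn ℝ (k : ℕ∞) f U ∧
  ∀ j ≤ k, (∃ M : ℝ, ∀ x ∈ U, ‖iteratedFDerivWithin ℝ j f U x‖ ≤ M) ∧
    (∃ H : ℝ, ∀ x ∈ U, ∀ y ∈ U,
      ‖iteratedFDerivWithin ℝ j f U x - iteratedFDerivWithin ℝ j f U y‖ ≤ H * ‖x - y‖ ^ σ)

variable {k : ℕ} {σ : ℝ} {U : Set E} {f g : E → F}

theorem shol_congr (h : EqOn f g U) (hf : SHol k σ U f) : SHol k σ U g := by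
  refine ⟨hf.1.congr h.symm, fun j hj => ?_⟩
  obtain ⟨⟨M, hM⟩, ⟨H, hH⟩⟩ := hf.2 j hj
  constructor
  · exact ⟨M, fun x hx => by
      rw [iteratedFDerivWithin_congr h.symm hx]; exact hM x hx⟩
  · exact ⟨H, fun x hx y hy => by
      rw [iteratedFDerivWithin_congr h.symm hx, iteratedFDerivWithin_congr h.symm hy]
      exact hH x hx y hy⟩

theorem shol_mono {k' : ℕ} (hk : k' ≤ k) (hf : SHol k σ U f) : SHol k' σ U f :=
  ⟨hf.1.of_le (by exact_mod_cast hk), fun j hj => hf.2 j (hj.trans hk)⟩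

theorem norm_sub_iteratedFDerivWithin_zero (x y : E) :
    ‖iteratedFDerivWithin ℝ 0 f U x - iteratedFDerivWithin ℝ 0 f U y‖ = ‖f x - f y‖ := by
  rw [iteratedFDerivWithin_zero_eq_comp]
  simp only [Function.comp_apply]
  rw [← LinearIsometryEquiv.map_sub, LinearIsometryEquiv.norm_map]

theorem shol_bdd0 (hf : SHol k σ U f) : ∃ M : ℝ, 0 ≤ M ∧ ∀ x ∈ U, ‖f x‖ ≤ M := by
  obtain ⟨M, hM⟩ := (hf.2 0 (Nat.zero_le _)).1
  refine ⟨max M 0, le_max_right _ _, fun x hx => ?_⟩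
  have := hM x hx
  rw [norm_iteratedFDerivWithin_zero] at this
  exact this.trans (le_max_left _ _)

theorem shol_hold0 (hf : SHol k σ U f) :
    ∃ H : ℝ, 0 ≤ H ∧ ∀ x ∈ U, ∀ y ∈ U, ‖f x - f y‖ ≤ H * ‖x - y‖ ^ σ := by
  obtain ⟨H, hH⟩ := (hf.2 0 (Nat.zero_le _)).2
  refine ⟨max H 0, le_max_right _ _, fun x hx y hy => ?_⟩
  have := hH x hx y hy
  rw [norm_sub_iteratedFDerivWithin_zero] at this
  exact this.trans (mul_le_mul_of_nonneg_right (le_max_left _ _)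
    (Real.rpow_nonneg (norm_nonneg _) _))

theorem shol_fderivWithin (hU : UniqueDiffOn ℝ U) (hf : SHol (k + 1) σ U f) :
    SHol k σ U (fderivWithin ℝ f U) := by
  constructor
  · exact hf.1.fderivWithin hU (by exact_mod_cast le_refl ((k:ℕ∞)+1))
  intro j hj
  obtain ⟨⟨M, hM⟩, ⟨H, hH⟩⟩ := hf.2 (j + 1) (by omega)
  constructor
  · refine ⟨M, fun x hx => ?_⟩
    rw [norm_iteratedFDerivWithin_fderivWithin hU hx]
    exact hM x hx
  · refine ⟨H, fun x hx y hy => ?_⟩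
    have ex : iteratedFDerivWithin ℝ (j+1) f U x =
        (continuousMultilinearCurryRightEquiv' ℝ j E F).symm
          (iteratedFDerivWithin ℝ j (fderivWithin ℝ f U) U x) :=
      iteratedFDerivWithin_succ_eq_comp_right hU hx
    have ey : iteratedFDerivWithin ℝ (j+1) f U y =
        (continuousMultilinearCurryRightEquiv' ℝ j E F).symm
          (iteratedFDerivWithin ℝ j (fderivWithin ℝ f U) U y) :=
      iteratedFDerivWithin_succ_eq_comp_right hU hy
    have := hH x hx y hy
    rw [ex, ey, ← LinearIsometryEquiv.map_sub, LinearIsometryEquiv.norm_map] at this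
    exact this

theorem shol_of_fderivWithin (hU : UniqueDiffOn ℝ U)
    (hcd : ContDiffOn ℝ ((k + 1 : ℕ) : ℕ∞) f U)
    (hb : ∃ M : ℝ, ∀ x ∈ U, ‖f x‖ ≤ M)
    (hh : ∃ H : ℝ, ∀ x ∈ U, ∀ y ∈ U, ‖f x - f y‖ ≤ H * ‖x - y‖ ^ σ)
    (hf' : SHol k σ U (fderivWithin ℝ f U)) : SHol (k + 1) σ U f := by
  refine ⟨hcd, fun j hj => ?_⟩
  match j with
  | 0 =>
    obtain ⟨M, hM⟩ := hb
    obtain ⟨H, hH⟩ := hh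
    exact ⟨⟨M, fun x hx => by rw [norm_iteratedFDerivWithin_zero]; exact hM x hx⟩,
      ⟨H, fun x hx y hy => by
        rw [norm_sub_iteratedFDerivWithin_zero]; exact hH x hx y hy⟩⟩
  | (j + 1) =>
    obtain ⟨⟨M, hM⟩, ⟨H, hH⟩⟩ := hf'.2 j (by omega)
    constructor
    · refine ⟨M, fun x hx => ?_⟩
      rw [← norm_iteratedFDerivWithin_fderivWithin hU hx]
      exact hM x hx
    · refine ⟨H, fun x hx y hy => ?_⟩
      rw [iteratedFDerivWithin_succ_eq_comp_right hU hx,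
        iteratedFDerivWithin_succ_eq_comp_right hU hy]
      simp only [Function.comp_apply]
      rw [← LinearIsometryEquiv.map_sub, LinearIsometryEquiv.norm_map]
      exact hH x hx y hy

theorem shol_add (hU : UniqueDiffOn ℝ U) (hf : SHol k σ U f) (hg : SHol k σ U g) :
    SHol k σ U (fun x => f x + g x) := by
  refine ⟨hf.1.add hg.1, fun j hj => ?_⟩
  have hf' : ContDiffOn ℝ (j : ℕ∞) f U := hf.1.of_le (by exact_mod_cast hj)
  have hg' : ContDiffOn ℝ (j : ℕ∞) g U := hg.1.of_le (by exact_mod_cast hj)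
  obtain ⟨⟨Mf, hMf⟩, ⟨Hf, hHf⟩⟩ := hf.2 j hj
  obtain ⟨⟨Mg, hMg⟩, ⟨Hg, hHg⟩⟩ := hg.2 j hj
  constructor
  · refine ⟨Mf + Mg, fun x hx => ?_⟩
    rw [iteratedFDerivWithin_add_apply' (hf' x hx) (hg' x hx) hU hx]
    exact (norm_add_le _ _).trans (add_le_add (hMf x hx) (hMg x hx))
  · refine ⟨Hf + Hg, fun x hx y hy => ?_⟩
    rw [iteratedFDerivWithin_add_apply' (hf' x hx) (hg' x hx) hU hx,
      iteratedFDerivWithin_add_apply' (hf' y hy) (hg' y hy) hU hy]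
    have : iteratedFDerivWithin ℝ j f U x + iteratedFDerivWithin ℝ j g U x -
        (iteratedFDerivWithin ℝ j f U y + iteratedFDerivWithin ℝ j g U y) =
        (iteratedFDerivWithin ℝ j f U x - iteratedFDerivWithin ℝ j f U y) +
        (iteratedFDerivWithin ℝ j g U x - iteratedFDerivWithin ℝ j g U y) := by abel
    rw [this, add_mul]
    exact (norm_add_le _ _).trans (add_le_add (hHf x hx y hy) (hHg x hx y hy))

theorem shol_clm (hU : UniqueDiffOn ℝ U) (L : F →L[ℝ] G) (hf : SHol k σ U f) :
    SHol k σ U (fun x => L (f x)) := by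
  have hcomp : ∀ j, j ≤ k → ∀ x ∈ U, iteratedFDerivWithin ℝ j (fun y => L (f y)) U x =
      L.compContinuousMultilinearMap (iteratedFDerivWithin ℝ j f U x) := by
    intro j hj x hx
    exact L.iteratedFDerivWithin_comp_left (hf.1 x hx) hU hx (by exact_mod_cast hj)
  refine ⟨hf.1.continuousLinearMap_comp L, fun j hj => ?_⟩
  obtain ⟨⟨M, hM⟩, ⟨H, hH⟩⟩ := hf.2 j hj
  have hsub : ∀ (a b : ContinuousMultilinearMap ℝ (fun _ : Fin j => E) F),
      L.compContinuousMultilinearMap a - L.compContinuousMultilinearMap b =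
        L.compContinuousMultilinearMap (a - b) := by
    intro a b
    ext m
    simp
  constructor
  · refine ⟨‖L‖ * max M 0, fun x hx => ?_⟩
    rw [hcomp j hj x hx]
    exact (L.norm_compContinuousMultilinearMap_le _).trans
      (mul_le_mul_of_nonneg_left ((hM x hx).trans (le_max_left _ _)) (norm_nonneg _))
  · refine ⟨‖L‖ * max H 0, fun x hx y hy => ?_⟩
    rw [hcomp j hj x hx, hcomp j hj y hy, hsub]
    calc ‖L.compContinuousMultilinearMap
          (iteratedFDerivWithin ℝ j f U x - iteratedFDerivWithin ℝ j f U y)‖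
        ≤ ‖L‖ * ‖iteratedFDerivWithin ℝ j f U x - iteratedFDerivWithin ℝ j f U y‖ :=
          L.norm_compContinuousMultilinearMap_le _
      _ ≤ ‖L‖ * (max H 0 * ‖x - y‖ ^ σ) := by
          refine mul_le_mul_of_nonneg_left ?_ (norm_nonneg _)
          exact (hH x hx y hy).trans (mul_le_mul_of_nonneg_right (le_max_left _ _)
            (Real.rpow_nonneg (norm_nonneg _) _))
      _ = ‖L‖ * max H 0 * ‖x - y‖ ^ σ := by ring

theorem shol_const (hU : UniqueDiffOn ℝ U) (c : F) : SHol k σ U (fun _ => c) := by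
  refine ⟨contDiffOn_const, fun j hj => ?_⟩
  by_cases hj0 : j = 0
  · subst hj0
    refine ⟨⟨‖c‖, fun x _ => ?_⟩, ⟨0, fun x _ y _ => ?_⟩⟩
    · rw [norm_iteratedFDerivWithin_zero]
    · rw [norm_sub_iteratedFDerivWithin_zero, sub_self, norm_zero, zero_mul]
  · refine ⟨⟨0, fun x hx => ?_⟩, ⟨0, fun x hx y hy => ?_⟩⟩
    · rw [iteratedFDerivWithin_const_of_ne hj0 c U, Pi.zero_apply, norm_zero]
    · rw [iteratedFDerivWithin_const_of_ne hj0 c U, Pi.zero_apply,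
        Pi.zero_apply, sub_self, norm_zero, zero_mul]

theorem shol_sum {ι : Type*} (hU : UniqueDiffOn ℝ U) (s : Finset ι) (f : ι → E → F)
    (h : ∀ i ∈ s, SHol k σ U (f i)) : SHol k σ U (fun x => ∑ i ∈ s, f i x) := by
  classical
  induction s using Finset.induction with
  | empty => simpa using shol_const hU (0 : F)
  | insert a s hni ih =>
    have : (fun x => ∑ i ∈ insert a s, f i x) = fun x => f a x + ∑ i ∈ s, f i x := by
      funext x
      rw [Finset.sum_insert hni]
    rw [this]
    exact shol_add hU (h a (Finset.mem_insert_self a s))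
      (ih fun i hi => h i (Finset.mem_insert_of_mem hi))

end Core

section Bilin
variable {E : Type} [NormedAddCommGroup E] [NormedSpace ℝ E]

theorem shol_zero_of {F : Type} [NormedAddCommGroup F] [NormedSpace ℝ F]
    {σ : ℝ} {U : Set E} {f : E → F}
    (hcd : ContDiffOn ℝ ((0 : ℕ) : ℕ∞) f U)
    (hb : ∃ M : ℝ, ∀ x ∈ U, ‖f x‖ ≤ M)
    (hh : ∃ H : ℝ, ∀ x ∈ U, ∀ y ∈ U, ‖f x - f y‖ ≤ H * ‖x - y‖ ^ σ) :
    SHol 0 σ U f := by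
  refine ⟨hcd, fun j hj => ?_⟩
  obtain rfl : j = 0 := Nat.le_zero.mp hj
  obtain ⟨M, hM⟩ := hb
  obtain ⟨H, hH⟩ := hh
  exact ⟨⟨M, fun x hx => by rw [norm_iteratedFDerivWithin_zero]; exact hM x hx⟩,
    ⟨H, fun x hx y hy => by
      rw [norm_sub_iteratedFDerivWithin_zero]; exact hH x hx y hy⟩⟩

theorem bilin_vals {F₁ F₂ G : Type} [NormedAddCommGroup F₁] [NormedSpace ℝ F₁]
    [NormedAddCommGroup F₂] [NormedSpace ℝ F₂] [NormedAddCommGroup G] [NormedSpace ℝ G]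
    {σ : ℝ} {U : Set E} {k : ℕ} (B : F₁ →L[ℝ] F₂ →L[ℝ] G) {f : E → F₁} {g : E → F₂}
    (hf : SHol k σ U f) (hg : SHol k σ U g) :
    (∃ M : ℝ, ∀ x ∈ U, ‖B (f x) (g x)‖ ≤ M) ∧
    (∃ H : ℝ, ∀ x ∈ U, ∀ y ∈ U, ‖B (f x) (g x) - B (f y) (g y)‖ ≤ H * ‖x - y‖ ^ σ) := by
  obtain ⟨Mf, hMf0, hMf⟩ := shol_bdd0 hf
  obtain ⟨Mg, hMg0, hMg⟩ := shol_bdd0 hg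
  obtain ⟨Hf, hHf0, hHf⟩ := shol_hold0 hf
  obtain ⟨Hg, hHg0, hHg⟩ := shol_hold0 hg
  constructor
  · refine ⟨‖B‖ * Mf * Mg, fun x hx => ?_⟩
    calc ‖B (f x) (g x)‖ ≤ ‖B‖ * ‖f x‖ * ‖g x‖ := B.le_opNorm₂ _ _
      _ ≤ ‖B‖ * Mf * Mg := by
          gcongr
          exacts [hMf x hx, hMg x hx]
  · refine ⟨‖B‖ * (Hf * Mg + Mf * Hg), fun x hx y hy => ?_⟩
    have hr : (0:ℝ) ≤ ‖x - y‖ ^ σ := Real.rpow_nonneg (norm_nonneg _) _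
    have key : B (f x) (g x) - B (f y) (g y)
        = B (f x - f y) (g x) + B (f y) (g x - g y) := by
      rw [map_sub, ContinuousLinearMap.sub_apply, map_sub]
      abel
    rw [key]
    calc ‖B (f x - f y) (g x) + B (f y) (g x - g y)‖
        ≤ ‖B (f x - f y) (g x)‖ + ‖B (f y) (g x - g y)‖ := norm_add_le _ _
      _ ≤ ‖B‖ * ‖f x - f y‖ * ‖g x‖ + ‖B‖ * ‖f y‖ * ‖g x - g y‖ :=
          add_le_add (B.le_opNorm₂ _ _) (B.le_opNorm₂ _ _)
      _ ≤ ‖B‖ * (Hf * ‖x - y‖ ^ σ) * Mg + ‖B‖ * Mf * (Hg * ‖x - y‖ ^ σ) := by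
          gcongr
          exacts [hHf x hx y hy, hMg x hx, hMf y hy, hHg x hx y hy]
      _ = ‖B‖ * (Hf * Mg + Mf * Hg) * ‖x - y‖ ^ σ := by ring

theorem shol_bilin (σ : ℝ) : ∀ k : ℕ, ∀ {F₁ F₂ G : Type}
    [NormedAddCommGroup F₁] [NormedSpace ℝ F₁] [NormedAddCommGroup F₂] [NormedSpace ℝ F₂]
    [NormedAddCommGroup G] [NormedSpace ℝ G], ∀ (B : F₁ →L[ℝ] F₂ →L[ℝ] G)
    {U : Set E}, IsOpen U → ∀ {f : E → F₁} {g : E → F₂},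
    SHol k σ U f → SHol k σ U g → SHol k σ U (fun x => B (f x) (g x)) := by
  intro k
  induction k with
  | zero =>
    intro F₁ F₂ G _ _ _ _ _ _ B U hU f g hf hg
    have vals := bilin_vals B hf hg
    exact shol_zero_of (B.isBoundedBilinearMap.contDiff.comp₂_contDiffOn hf.1 hg.1)
      vals.1 vals.2
  | succ k IH =>
    intro F₁ F₂ G _ _ _ _ _ _ B U hU f g hf hg
    have vals := bilin_vals B hf hg
    have hone : (1 : WithTop ℕ∞) ≤ ((k + 1 : ℕ) : ℕ∞) := by exact_mod_cast Nat.succ_le_succ (Nat.zero_le k)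
    refine shol_of_fderivWithin hU.uniqueDiffOn
      (B.isBoundedBilinearMap.contDiff.comp₂_contDiffOn hf.1 hg.1) vals.1 vals.2 ?_
    have heq : EqOn
        (fun y => B.precompR E (f y) (fderivWithin ℝ g U y)
          + B.precompL E (fderivWithin ℝ f U y) (g y))
        (fderivWithin ℝ (fun x => B (f x) (g x)) U) U := by
      intro y hy
      exact (B.fderivWithin_of_bilinear (hf.1.differentiableOn (by simp) y hy)
        (hg.1.differentiableOn (by simp) y hy) (hU.uniqueDiffOn y hy)).symm
    refine shol_congr heq (shol_add hU.uniqueDiffOn ?_ ?_)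
    · exact IH (B.precompR E) hU (shol_mono (Nat.le_succ k) hf)
        (shol_fderivWithin hU.uniqueDiffOn hg)
    · exact IH (B.precompL E) hU (shol_fderivWithin hU.uniqueDiffOn hf)
        (shol_mono (Nat.le_succ k) hg)

end Bilin

section Comp
variable {E₁ E₂ : Type} [NormedAddCommGroup E₁] [NormedSpace ℝ E₁]
  [NormedAddCommGroup E₂] [NormedSpace ℝ E₂]

theorem comp_vals {F : Type} [NormedAddCommGroup F] [NormedSpace ℝ F]
    {σ : ℝ} (hσ0 : 0 < σ) {U : Set E₁} {V : Set E₂} {f₁ : E₁ → E₂}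
    (hmaps : Set.MapsTo f₁ U V) {C : ℝ} (hC : 0 ≤ C)
    (hlip : ∀ x ∈ U, ∀ y ∈ U, ‖f₁ x - f₁ y‖ ≤ C * ‖x - y‖)
    {k : ℕ} (f₂ : E₂ → F) (hf₂ : SHol k σ V f₂) :
    (∃ M : ℝ, ∀ x ∈ U, ‖f₂ (f₁ x)‖ ≤ M) ∧
    (∃ H : ℝ, ∀ x ∈ U, ∀ y ∈ U, ‖f₂ (f₁ x) - f₂ (f₁ y)‖ ≤ H * ‖x - y‖ ^ σ) := by
  obtain ⟨M, _, hM⟩ := shol_bdd0 hf₂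
  obtain ⟨H, hH0, hH⟩ := shol_hold0 hf₂
  refine ⟨⟨M, fun x hx => hM _ (hmaps hx)⟩, ⟨H * C ^ σ, fun x hx y hy => ?_⟩⟩
  calc ‖f₂ (f₁ x) - f₂ (f₁ y)‖ ≤ H * ‖f₁ x - f₁ y‖ ^ σ := hH _ (hmaps hx) _ (hmaps hy)
    _ ≤ H * (C * ‖x - y‖) ^ σ :=
        mul_le_mul_of_nonneg_left
          (Real.rpow_le_rpow (norm_nonneg _) (hlip x hx y hy) hσ0.le) hH0
    _ = H * C ^ σ * ‖x - y‖ ^ σ := by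
        rw [Real.mul_rpow hC (norm_nonneg _)]; ring

theorem shol_comp {σ : ℝ} (hσ0 : 0 < σ) {U : Set E₁} {V : Set E₂}
    (hU : IsOpen U) (hV : IsOpen V) {f₁ : E₁ → E₂} (hmaps : Set.MapsTo f₁ U V)
    {C : ℝ} (hC : 0 ≤ C) (hlip : ∀ x ∈ U, ∀ y ∈ U, ‖f₁ x - f₁ y‖ ≤ C * ‖x - y‖)
    (ktop : ℕ) (hf₁ : SHol ktop σ U f₁) :
    ∀ k : ℕ, k ≤ ktop → ∀ {F : Type} [NormedAddCommGroup F] [NormedSpace ℝ F],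
      ∀ (f₂ : E₂ → F), SHol k σ V f₂ → SHol k σ U (fun x => f₂ (f₁ x)) := by
  intro k
  induction k with
  | zero =>
    intro hk F _ _ f₂ hf₂
    have vals := comp_vals hσ0 hmaps hC hlip f₂ hf₂
    exact shol_zero_of (hf₂.1.comp (hf₁.1.of_le (by exact_mod_cast Nat.zero_le ktop)) hmaps)
      vals.1 vals.2
  | succ k IH =>
    intro hk F _ _ f₂ hf₂
    have vals := comp_vals hσ0 hmaps hC hlip f₂ hf₂
    have hone : (1 : WithTop ℕ∞) ≤ ((k + 1 : ℕ) : ℕ∞) := by exact_mod_cast Nat.succ_le_succ (Nat.zero_le k)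
    have hf₁k : SHol (k + 1) σ U f₁ := shol_mono hk hf₁
    have hcd : ContDiffOn ℝ ((k + 1 : ℕ) : ℕ∞) (fun x => f₂ (f₁ x)) U :=
      hf₂.1.comp hf₁k.1 hmaps
    refine shol_of_fderivWithin hU.uniqueDiffOn hcd vals.1 vals.2 ?_
    have heq : EqOn
        (fun x => (ContinuousLinearMap.compL ℝ E₁ E₂ F)
          (fderivWithin ℝ f₂ V (f₁ x)) (fderivWithin ℝ f₁ U x))
        (fderivWithin ℝ (fun x => f₂ (f₁ x)) U) U := by
      intro x hx
      have d₂ : DifferentiableAt ℝ f₂ (f₁ x) :=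
        (hf₂.1.differentiableOn (by simp) _ (hmaps hx)).differentiableAt
          (hV.mem_nhds (hmaps hx))
      have d₁ : DifferentiableAt ℝ f₁ x :=
        (hf₁k.1.differentiableOn (by simp) x hx).differentiableAt (hU.mem_nhds hx)
      have : fderivWithin ℝ (fun x => f₂ (f₁ x)) U x = fderiv ℝ (f₂ ∘ f₁) x :=
        fderivWithin_of_isOpen hU hx
      rw [this, fderiv_comp x d₂ d₁]
      simp only [ContinuousLinearMap.compL_apply]
      rw [fderivWithin_of_isOpen hV (hmaps hx), fderivWithin_of_isOpen hU hx]
    refine shol_congr heq ?_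
    exact shol_bilin σ k (ContinuousLinearMap.compL ℝ E₁ E₂ F) hU
      (IH (Nat.le_of_succ_le hk) (fderivWithin ℝ f₂ V)
        (shol_fderivWithin hV.uniqueDiffOn hf₂))
      (shol_fderivWithin hU.uniqueDiffOn hf₁k)

end Comp

section Seg
variable {E : Type} [NormedAddCommGroup E] [NormedSpace ℝ E]
variable {F : Type} [NormedAddCommGroup F] [NormedSpace ℝ F]

/-- Three-segment chain property: nearby points of `U` can be joined by three segments
inside `U` of total length controlled by the distance. -/
def SegProp (ε K : ℝ) (U : Set E) : Prop :=
  ∀ x ∈ U, ∀ y ∈ U, ‖x - y‖ < ε → ∃ p q : E,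
    segment ℝ x p ⊆ U ∧ segment ℝ p q ⊆ U ∧ segment ℝ q y ⊆ U ∧
    ‖x - p‖ + ‖p - q‖ + ‖q - y‖ ≤ K * ‖x - y‖

theorem seg_mvt {U : Set E} (hU : IsOpen U) {f : E → F} (hf : DifferentiableOn ℝ f U)
    {M : ℝ} (hb : ∀ x ∈ U, ‖fderivWithin ℝ f U x‖ ≤ M) {a b : E}
    (hsub : segment ℝ a b ⊆ U) : ‖f b - f a‖ ≤ M * ‖b - a‖ := by
  refine Convex.norm_image_sub_le_of_norm_hasFDerivWithin_le
    (f' := fun u => fderiv ℝ f u) (fun u hu => ?_) (fun u hu => ?_)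
    (convex_segment a b) (left_mem_segment ℝ a b) (right_mem_segment ℝ a b)
  · exact ((hf u (hsub hu)).differentiableAt (hU.mem_nhds (hsub hu))).hasFDerivAt.hasFDerivWithinAt
  · show ‖fderiv ℝ f u‖ ≤ M
    rw [← fderivWithin_of_isOpen hU (hsub hu)]
    exact hb u (hsub hu)

theorem hold_of_bdd_deriv {U : Set E} (hU : IsOpen U) {ε K : ℝ} (hε : 0 < ε) (hK : 0 ≤ K)
    (hseg : SegProp ε K U) {σ : ℝ} (hσ0 : 0 < σ) (hσ1 : σ ≤ 1)
    {f : E → F} (hf : DifferentiableOn ℝ f U) {M₀ M : ℝ} (hM₀ : 0 ≤ M₀) (hM : 0 ≤ M)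
    (hb0 : ∀ x ∈ U, ‖f x‖ ≤ M₀) (hb1 : ∀ x ∈ U, ‖fderivWithin ℝ f U x‖ ≤ M) :
    ∃ H : ℝ, ∀ x ∈ U, ∀ y ∈ U, ‖f x - f y‖ ≤ H * ‖x - y‖ ^ σ := by
  refine ⟨max (M * K * ε ^ (1 - σ)) (2 * M₀ / ε ^ σ), fun x hx y hy => ?_⟩
  have hεσ : (0:ℝ) < ε ^ σ := Real.rpow_pos_of_pos hε σ
  have hH0 : (0:ℝ) ≤ max (M * K * ε ^ (1 - σ)) (2 * M₀ / ε ^ σ) := by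
    refine le_trans ?_ (le_max_right _ _)
    positivity
  by_cases hxy : x = y
  · subst hxy
    simp [Real.zero_rpow (ne_of_gt hσ0)]
  have hpos : (0:ℝ) < ‖x - y‖ := by
    rw [norm_pos_iff]
    exact sub_ne_zero_of_ne hxy
  by_cases hlt : ‖x - y‖ < ε
  · obtain ⟨p, q, h1, h2, h3, hlen⟩ := hseg x hx y hy hlt
    have e1 : ‖f p - f x‖ ≤ M * ‖p - x‖ := seg_mvt hU hf hb1 h1
    have e2 : ‖f q - f p‖ ≤ M * ‖q - p‖ := seg_mvt hU hf hb1 h2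
    have e3 : ‖f y - f q‖ ≤ M * ‖y - q‖ := seg_mvt hU hf hb1 h3
    have tri : ‖f x - f y‖ ≤ ‖f p - f x‖ + ‖f q - f p‖ + ‖f y - f q‖ := by
      have : f x - f y = -((f p - f x) + (f q - f p) + (f y - f q)) := by abel
      rw [this, norm_neg]
      exact (norm_add_le _ _).trans (add_le_add_left (norm_add_le _ _) _)
    have hnorms : ‖p - x‖ + ‖q - p‖ + ‖y - q‖ ≤ K * ‖x - y‖ := by
      rw [norm_sub_rev p x, norm_sub_rev q p, norm_sub_rev y q]
      exact hlen
    have key : ‖f x - f y‖ ≤ M * K * ‖x - y‖ := by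
      calc ‖f x - f y‖ ≤ ‖f p - f x‖ + ‖f q - f p‖ + ‖f y - f q‖ := tri
        _ ≤ M * (‖p - x‖ + ‖q - p‖ + ‖y - q‖) := by
            rw [mul_add, mul_add]
            exact add_le_add (add_le_add e1 e2) e3
        _ ≤ M * (K * ‖x - y‖) := mul_le_mul_of_nonneg_left hnorms hM
        _ = M * K * ‖x - y‖ := by ring
    have split : ‖x - y‖ = ‖x - y‖ ^ (1 - σ) * ‖x - y‖ ^ σ := by
      rw [← Real.rpow_add hpos]
      norm_num
    have h1σ : ‖x - y‖ ^ (1 - σ) ≤ ε ^ (1 - σ) :=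
      Real.rpow_le_rpow (norm_nonneg _) hlt.le (by linarith)
    calc ‖f x - f y‖ ≤ M * K * ‖x - y‖ := key
      _ = M * K * ‖x - y‖ ^ (1 - σ) * ‖x - y‖ ^ σ := by rw [mul_assoc (M*K), ← split]
      _ ≤ M * K * ε ^ (1 - σ) * ‖x - y‖ ^ σ := by
          refine mul_le_mul_of_nonneg_right ?_ (Real.rpow_nonneg (norm_nonneg _) _)
          exact mul_le_mul_of_nonneg_left h1σ (by positivity)
      _ ≤ max (M * K * ε ^ (1 - σ)) (2 * M₀ / ε ^ σ) * ‖x - y‖ ^ σ :=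
          mul_le_mul_of_nonneg_right (le_max_left _ _) (Real.rpow_nonneg (norm_nonneg _) _)
  · push_neg at hlt
    have hεx : ε ^ σ ≤ ‖x - y‖ ^ σ := Real.rpow_le_rpow hε.le hlt hσ0.le
    calc ‖f x - f y‖ ≤ ‖f x‖ + ‖f y‖ := norm_sub_le _ _
      _ ≤ 2 * M₀ := by have := hb0 x hx; have := hb0 y hy; linarith
      _ = 2 * M₀ / ε ^ σ * ε ^ σ := by field_simp
      _ ≤ 2 * M₀ / ε ^ σ * ‖x - y‖ ^ σ := by
          refine mul_le_mul_of_nonneg_left hεx (by positivity)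
      _ ≤ max (M * K * ε ^ (1 - σ)) (2 * M₀ / ε ^ σ) * ‖x - y‖ ^ σ :=
          mul_le_mul_of_nonneg_right (le_max_right _ _) (Real.rpow_nonneg (norm_nonneg _) _)

/-- Upgrade `MemHolderCs` (Hölder only at top order) to `SHol` (Hölder at all orders)
on an open set with the three-segment chain property. -/
theorem shol_of_memHolder {U : Set E} (hU : IsOpen U) {ε K : ℝ} (hε : 0 < ε) (hK : 0 ≤ K)
    (hseg : SegProp ε K U) {σ : ℝ} (hσ0 : 0 < σ) (hσ1 : σ ≤ 1) {k : ℕ} {f : E → F}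
    (hm : MemHolderCs k σ U f) : SHol k σ U f := by
  obtain ⟨hcd, hbdd, hhold⟩ := hm
  refine ⟨hcd, fun j hj => ⟨hbdd j hj, ?_⟩⟩
  rcases eq_or_lt_of_le hj with rfl | hjk
  · exact hhold
  · obtain ⟨M₀, hM₀⟩ := hbdd j hj
    obtain ⟨M₁, hM₁⟩ := hbdd (j + 1) hjk
    refine hold_of_bdd_deriv hU hε hK hseg hσ0 hσ1
      (hcd.differentiableOn_iteratedFDerivWithin (by exact_mod_cast hjk) hU.uniqueDiffOn)
      (le_max_right M₀ 0) (le_max_right M₁ 0)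
      (fun x hx => (hM₀ x hx).trans (le_max_left _ _)) (fun x hx => ?_)
    rw [norm_fderivWithin_iteratedFDerivWithin]
    exact (hM₁ x hx).trans (le_max_left _ _)

end Seg

section Geom

private theorem hcond_aux {δ L b : ℝ} (hδ : 0 < δ) (hL : 0 < L) (hb0 : 0 ≤ b) (hb1 : b ≤ 1) :
    2 * δ * (b * (1 - b)) * L ≤ (1 + δ) * L := by
  nlinarith [sq_nonneg (2 * b - 1), mul_pos hδ hL]

set_option maxHeartbeats 1000000 in
theorem lipdomain_segprop {d : ℕ} (hd : 0 < d) {δ R : ℝ} (hδ : 0 < δ) (hR : 0 < R)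
    {Ω : Set (EuclideanSpace ℝ (Fin d))} (h : IsLipDomainD hd δ R Ω) :
    ∃ ε K : ℝ, 0 < ε ∧ 1 ≤ K ∧ SegProp ε K Ω := by
  obtain ⟨hopen, -, hbdd, hchart⟩ := h
  set ed : Fin d := lastIdx d hd with hed
  refine ⟨R / (6 + 2 * δ), 3 + 2 * δ, by positivity, by linarith, ?_⟩
  set ε := R / (6 + 2 * δ) with hεdef
  have hεpos : 0 < ε := by rw [hεdef]; positivity
  have h6 : (0:ℝ) < 6 + 2 * δ := by linarith
  have hεR : (3 + δ) * ε < R := by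
    rw [hεdef, show (3 + δ) * (R / (6 + 2 * δ)) = R * ((3 + δ) / (6 + 2 * δ)) by ring]
    exact mul_lt_of_lt_one_right hR ((div_lt_one h6).2 (by linarith))
  have hεltR : ε < R := by nlinarith
  intro x hx y hy hxy
  by_cases hxyeq : x = y
  · subst hxyeq
    refine ⟨x, x, ?_, ?_, ?_, ?_⟩ <;>
      simp [segment_same, singleton_subset_iff, hx, sub_self]
  -- the complement is nonempty and closed
  have hcne : Ωᶜ.Nonempty := by
    obtain ⟨r, hr⟩ := hbdd.subset_closedBall 0
    refine ⟨EuclideanSpace.single ed (|r| + 1), fun hmem => ?_⟩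
    have h1 := hr hmem
    rw [Metric.mem_closedBall, dist_zero_right, EuclideanSpace.norm_single,
      Real.norm_eq_abs] at h1
    have : |r| + 1 ≤ |(|r| + 1)| := le_abs_self _
    have habs : |r| + 1 ≤ r := le_trans this h1
    have : r ≤ |r| := le_abs_self r
    linarith
  have hcc : IsClosed (Ωᶜ) := hopen.isClosed_compl
  obtain ⟨r₀, hr₀pos, hball⟩ := Metric.isOpen_iff.1 hopen x hx
  have hDpos : 0 < Metric.infDist x Ωᶜ := by
    by_contra hcon
    push_neg at hcon
    obtain ⟨w, hw, hwd⟩ := (Metric.infDist_lt_iff hcne).1 (lt_of_le_of_lt hcon hr₀pos)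
    exact hw (hball (by rwa [Metric.mem_ball, dist_comm]))
  have hmem_of_close : ∀ u, dist x u < Metric.infDist x Ωᶜ → u ∈ Ω := by
    intro u hu
    by_contra hun
    have hle : Metric.infDist x Ωᶜ ≤ dist x u := Metric.infDist_le_dist_of_mem hun
    linarith
  by_cases hclose : ‖x - y‖ < Metric.infDist x Ωᶜ
  · -- interior case: the straight segment works
    have hsub : segment ℝ x y ⊆ Ω := by
      rintro w ⟨a, b, ha, hb, hab, rfl⟩
      apply hmem_of_close
      have heq : x - (a • x + b • y) = b • (x - y) := by
        rw [smul_sub]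
        nth_rewrite 1 [show x = a • x + b • x by rw [← add_smul, hab, one_smul]]
        abel
      rw [dist_eq_norm, heq, norm_smul, Real.norm_eq_abs, abs_of_nonneg hb]
      calc b * ‖x - y‖ ≤ 1 * ‖x - y‖ :=
            mul_le_mul_of_nonneg_right (by linarith) (norm_nonneg _)
        _ < Metric.infDist x Ωᶜ := by rw [one_mul]; exact hclose
    refine ⟨y, y, hsub, ?_, ?_, ?_⟩
    · rw [segment_same]; exact singleton_subset_iff.2 hy
    · rw [segment_same]; exact singleton_subset_iff.2 hy
    · have := norm_nonneg (x - y)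
      simp only [sub_self, norm_zero, add_zero]
      nlinarith
  -- boundary case
  push_neg at hclose
  obtain ⟨z, hzc, hzd⟩ := hcc.exists_infDist_eq_dist hcne x
  have hxz : ‖x - z‖ ≤ ‖x - y‖ := by
    rw [← dist_eq_norm, ← hzd]
    exact hclose
  have hzf : z ∈ frontier Ω := by
    rw [frontier_eq_closure_inter_closure]
    refine ⟨?_, subset_closure hzc⟩
    rw [_root_.mem_closure_iff]
    intro O hO hzO
    obtain ⟨r, hrpos, hrO⟩ := Metric.isOpen_iff.1 hO z hzO
    have hDz : dist x z = Metric.infDist x Ωᶜ := hzd.symm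
    set D := Metric.infDist x Ωᶜ with hD
    set t : ℝ := min 1 (r / (2 * D)) with ht
    have ht0 : 0 < t := lt_min one_pos (by positivity)
    have ht1 : t ≤ 1 := min_le_left _ _
    have htr : t ≤ r / (2 * D) := min_le_right _ _
    have hxzD : ‖x - z‖ = D := by rw [← dist_eq_norm, hDz]
    refine ⟨z + t • (x - z), hrO ?_, hmem_of_close _ ?_⟩
    · rw [Metric.mem_ball, dist_eq_norm]
      have heq : z + t • (x - z) - z = t • (x - z) := by abel
      rw [heq, norm_smul, Real.norm_eq_abs, abs_of_nonneg ht0.le, hxzD]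
      calc t * D ≤ r / (2 * D) * D := mul_le_mul_of_nonneg_right htr hDpos.le
        _ = r / 2 := by field_simp
        _ < r := by linarith
    · rw [dist_eq_norm]
      have heq : x - (z + t • (x - z)) = (1 - t) • (x - z) := by
        rw [sub_smul, one_smul]; abel
      rw [heq, norm_smul, Real.norm_eq_abs, abs_of_nonneg (by linarith), hxzD]
      nlinarith
  obtain ⟨g, A, hALip, hAdep, -, hKey⟩ := hchart z hzf
  set xh := g (x - z) with hxh
  set yh := g (y - z) with hyh
  set L := ‖x - y‖ with hL
  have hLpos : 0 < L := by
    rw [hL, norm_pos_iff]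
    exact sub_ne_zero_of_ne hxyeq
  have hLε : L < ε := hxy
  have hnx : ‖xh‖ ≤ L := by rw [hxh, g.norm_map]; exact hxz
  have hxy' : ‖xh - yh‖ = L := by
    rw [hxh, hyh, ← map_sub, g.norm_map, hL]
    congr 1
    abel
  have hny : ‖yh‖ ≤ 2 * L := by
    calc ‖yh‖ = ‖xh - (xh - yh)‖ := by congr 1; abel
      _ ≤ ‖xh‖ + ‖xh - yh‖ := norm_sub_le _ _
      _ ≤ L + L := add_le_add hnx (le_of_eq hxy')
      _ = 2 * L := by ring
  set hh := (1 + δ) * L with hhh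
  have hhpos : 0 < hh := by rw [hhh]; positivity
  have hhε : hh ≤ (1 + δ) * ε := by
    rw [hhh]
    exact mul_le_mul_of_nonneg_left hLε.le (by linarith)
  -- membership criteria from the chart
  have mem_of : ∀ u : EuclideanSpace ℝ (Fin d), (∀ i, |u i| < R) → A u < u ed →
      z + g.symm u ∈ Ω := by
    intro u h1 h2
    have hmem : u ∈ ((fun w => g (w - z)) '' Ω) ∩ {x | ∀ i : Fin d, |x i| < R} := by
      rw [hKey]
      exact ⟨h1, h2⟩
    obtain ⟨⟨w, hw, hwu⟩, -⟩ := hmem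
    have heq : z + g.symm u = w := by
      rw [← hwu]
      simp only [LinearIsometryEquiv.symm_apply_apply]
      abel
    rwa [heq]
  have prop_of : ∀ w ∈ Ω, (∀ i, |g (w - z) i| < R) → A (g (w - z)) < g (w - z) ed := by
    intro w hw h1
    have hmem : g (w - z) ∈ {x : EuclideanSpace ℝ (Fin d) |
        (∀ i : Fin d, |x i| < R) ∧ A x < x (lastIdx d hd)} := by
      rw [← hKey]
      exact ⟨⟨w, hw, rfl⟩, h1⟩
    exact hmem.2
  have hcoordx : ∀ i, |xh i| < R :=
    fun i => lt_of_le_of_lt ((abs_coord_le_norm xh i).trans hnx) (by nlinarith)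
  have hcoordy : ∀ i, |yh i| < R :=
    fun i => lt_of_le_of_lt ((abs_coord_le_norm yh i).trans hny) (by nlinarith)
  have hAx : A xh < xh ed := prop_of x hx hcoordx
  have hAy : A yh < yh ed := prop_of y hy hcoordy
  -- the single-coordinate helper
  have hsingle_smul : ∀ (c τ : ℝ),
      EuclideanSpace.single ed (c * τ) = c • EuclideanSpace.single ed τ := by
    intro c τ
    ext j
    simp [EuclideanSpace.single_apply, mul_ite, mul_zero]
  -- main membership claim
  have main : ∀ t τ : ℝ, 0 ≤ t → t ≤ 1 → 2 * δ * (t * (1 - t)) * L ≤ τ → τ ≤ hh →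
      z + g.symm ((1 - t) • xh + t • yh + EuclideanSpace.single ed τ) ∈ Ω := by
    intro t τ ht0 ht1 hτ0 hτh
    have hτnn : 0 ≤ τ :=
      le_trans (mul_nonneg (mul_nonneg (by positivity) (mul_nonneg ht0 (by linarith))) hLpos.le) hτ0
    set v := (1 - t) • xh + t • yh with hv
    set u := v + EuclideanSpace.single ed τ with hu
    have hvapp : ∀ i, v i = (1 - t) * xh i + t * yh i := by
      intro i
      simp [hv, PiLp.add_apply, PiLp.smul_apply, smul_eq_mul]
    have huapp : ∀ i, u i = v i + (if i = ed then τ else 0) := by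
      intro i
      simp [hu, PiLp.add_apply, EuclideanSpace.single_apply]
    have hvc : ∀ i, |v i| ≤ 2 * ε := by
      intro i
      rw [hvapp i]
      have h1 : |xh i| ≤ ε := ((abs_coord_le_norm xh i).trans hnx).trans hLε.le
      have h2 : |yh i| ≤ 2 * ε := ((abs_coord_le_norm yh i).trans hny).trans (by nlinarith)
      calc |(1 - t) * xh i + t * yh i| ≤ |(1 - t) * xh i| + |t * yh i| := abs_add_le _ _
        _ = (1 - t) * |xh i| + t * |yh i| := by
            rw [abs_mul, abs_mul, abs_of_nonneg (by linarith : (0:ℝ) ≤ 1 - t),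
              abs_of_nonneg ht0]
        _ ≤ (1 - t) * ε + t * (2 * ε) := by
            refine add_le_add (mul_le_mul_of_nonneg_left h1 (by linarith))
              (mul_le_mul_of_nonneg_left h2 ht0)
        _ ≤ 2 * ε := by nlinarith
    have huc : ∀ i, |u i| < R := by
      intro i
      rw [huapp i]
      by_cases hi : i = ed
      · rw [if_pos hi]
        calc |v i + τ| ≤ |v i| + |τ| := abs_add_le _ _
          _ ≤ 2 * ε + (1 + δ) * ε := by
              refine add_le_add (hvc i) ?_
              rw [abs_of_nonneg hτnn]
              exact hτh.trans hhε
          _ < R := by nlinarith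
      · rw [if_neg hi, add_zero]
        exact lt_of_le_of_lt (hvc i) (by nlinarith)
    have hAuv : A u = A v := by
      refine hAdep u v fun i hi => ?_
      rw [huapp i, if_neg hi, add_zero]
    have hδc : (Real.toNNReal δ : ℝ) = δ := Real.coe_toNNReal δ hδ.le
    -- Lipschitz bound from the xh side
    have lip1 : A v ≤ A xh + δ * (t * L) := by
      set w1 := xh + EuclideanSpace.single ed (v ed - xh ed) with hw1
      have hw1app : ∀ i, w1 i = xh i + (if i = ed then v ed - xh ed else 0) := by
        intro i
        simp [hw1, PiLp.add_apply, EuclideanSpace.single_apply]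
      have hAw1 : A w1 = A xh := by
        refine hAdep w1 xh fun i hi => ?_
        rw [hw1app i, if_neg hi, add_zero]
      have hdist : ‖v - w1‖ ≤ t * L := by
        have hcoord : ∀ i, |(v - w1) i| ≤ |(t • (yh - xh)) i| := by
          intro i
          have hsub : (v - w1) i = v i - w1 i := by simp [PiLp.sub_apply]
          have hsmul : (t • (yh - xh)) i = t * (yh i - xh i) := by
            simp [PiLp.smul_apply, PiLp.sub_apply, smul_eq_mul]
          rw [hsub, hsmul, hw1app i, hvapp i]
          by_cases hi : i = ed
          · rw [if_pos hi, hi]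
            rw [hvapp ed]
            have hz0 : (1 - t) * xh ed + t * yh ed - (xh ed + ((1 - t) * xh ed + t * yh ed - xh ed)) = 0 := by ring
            rw [hz0, abs_zero]
            exact abs_nonneg _
          · rw [if_neg hi, add_zero]
            have : (1 - t) * xh i + t * yh i - xh i = t * (yh i - xh i) := by ring
            rw [this]
        calc ‖v - w1‖ ≤ ‖t • (yh - xh)‖ := norm_le_of_coord _ _ hcoord
          _ = t * L := by
              rw [norm_smul, Real.norm_eq_abs, abs_of_nonneg ht0, norm_sub_rev, hxy']
      have := hALip.dist_le_mul v w1
      rw [hδc, Real.dist_eq] at this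
      have habs : A v - A w1 ≤ δ * ‖v - w1‖ := by
        refine le_trans (le_abs_self _) (le_trans this ?_)
        rw [dist_eq_norm]
      have : A v ≤ A w1 + δ * (t * L) := by
        have := mul_le_mul_of_nonneg_left hdist hδ.le
        linarith
      rwa [hAw1] at this
    -- Lipschitz bound from the yh side
    have lip2 : A v ≤ A yh + δ * ((1 - t) * L) := by
      set w2 := yh + EuclideanSpace.single ed (v ed - yh ed) with hw2
      have hw2app : ∀ i, w2 i = yh i + (if i = ed then v ed - yh ed else 0) := by
        intro i
        simp [hw2, PiLp.add_apply, EuclideanSpace.single_apply]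
      have hAw2 : A w2 = A yh := by
        refine hAdep w2 yh fun i hi => ?_
        rw [hw2app i, if_neg hi, add_zero]
      have hdist : ‖v - w2‖ ≤ (1 - t) * L := by
        have hcoord : ∀ i, |(v - w2) i| ≤ |((1 - t) • (xh - yh)) i| := by
          intro i
          have hsub : (v - w2) i = v i - w2 i := by simp [PiLp.sub_apply]
          have hsmul : ((1 - t) • (xh - yh)) i = (1 - t) * (xh i - yh i) := by
            simp [PiLp.smul_apply, PiLp.sub_apply, smul_eq_mul]
          rw [hsub, hsmul, hw2app i, hvapp i]
          by_cases hi : i = ed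
          · rw [if_pos hi, hi]
            rw [hvapp ed]
            have : (1 - t) * xh ed + t * yh ed - (yh ed + ((1 - t) * xh ed + t * yh ed - yh ed)) = 0 := by ring
            rw [this, abs_zero]
            exact abs_nonneg _
          · rw [if_neg hi, add_zero]
            have : (1 - t) * xh i + t * yh i - yh i = (1 - t) * (xh i - yh i) := by ring
            rw [this]
        calc ‖v - w2‖ ≤ ‖(1 - t) • (xh - yh)‖ := norm_le_of_coord _ _ hcoord
          _ = (1 - t) * L := by
              rw [norm_smul, Real.norm_eq_abs, abs_of_nonneg (by linarith : (0:ℝ) ≤ 1 - t), hxy']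
      have := hALip.dist_le_mul v w2
      rw [hδc, Real.dist_eq] at this
      have habs : A v - A w2 ≤ δ * ‖v - w2‖ := by
        refine le_trans (le_abs_self _) (le_trans this ?_)
        rw [dist_eq_norm]
      have : A v ≤ A w2 + δ * ((1 - t) * L) := by
        have := mul_le_mul_of_nonneg_left hdist hδ.le
        linarith
      rwa [hAw2] at this
    -- combine
    have hved : v ed = (1 - t) * xh ed + t * yh ed := hvapp ed
    have hued : u ed = v ed + τ := by rw [huapp ed, if_pos rfl]
    have hab : 0 < (1 - t) * (xh ed - A xh) + t * (yh ed - A yh) := by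
      rcases le_total t (1/2) with hhalf | hhalf
      · nlinarith [mul_nonneg ht0 (by linarith : (0:ℝ) ≤ yh ed - A yh)]
      · nlinarith [mul_nonneg (by linarith : (0:ℝ) ≤ 1 - t)
          (by linarith : (0:ℝ) ≤ xh ed - A xh)]
    have hAv : A v < v ed + τ := by
      have c1 : (1 - t) * A v ≤ (1 - t) * (A xh + δ * (t * L)) :=
        mul_le_mul_of_nonneg_left lip1 (by linarith)
      have c2 : t * A v ≤ t * (A yh + δ * ((1 - t) * L)) :=
        mul_le_mul_of_nonneg_left lip2 ht0
      nlinarith [hab, hτ0]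
    refine mem_of u huc ?_
    rw [hAuv, hued]
    exact hAv
  -- construct the chain
  set s0 : EuclideanSpace ℝ (Fin d) := g.symm (EuclideanSpace.single ed hh) with hs0
  have hxzdef : x = z + g.symm xh := by
    rw [hxh]
    simp only [LinearIsometryEquiv.symm_apply_apply]
    abel
  have hyzdef : y = z + g.symm yh := by
    rw [hyh]
    simp only [LinearIsometryEquiv.symm_apply_apply]
    abel
  set p : EuclideanSpace ℝ (Fin d) := z + g.symm xh + s0 with hp
  set q : EuclideanSpace ℝ (Fin d) := z + g.symm yh + s0 with hq
  have hαsmul : ∀ (c : ℝ), g.symm (EuclideanSpace.single ed (c * hh)) = c • s0 := by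
    intro c
    rw [hsingle_smul c hh, LinearIsometryEquiv.map_smul, ← hs0]
  refine ⟨p, q, ?_, ?_, ?_, ?_⟩
  · -- segment x p
    rintro w ⟨a, b, ha, hb, hab, rfl⟩
    have hb1 : b ≤ 1 := by linarith
    have hc1 : 2 * δ * (0 * (1 - 0)) * L ≤ b * hh := by
      rw [show 2 * δ * (0 * (1 - (0:ℝ))) * L = 0 by ring]
      exact mul_nonneg hb hhpos.le
    have hc2 : b * hh ≤ hh := by
      calc b * hh ≤ 1 * hh := mul_le_mul_of_nonneg_right hb1 hhpos.le
        _ = hh := one_mul hh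
    have hmem := main 0 (b * hh) le_rfl zero_le_one hc1 hc2
    simp only [sub_zero, one_smul, zero_smul, add_zero] at hmem
    have heq : a • x + b • p = z + g.symm (xh + EuclideanSpace.single ed (b * hh)) := by
      rw [map_add, hαsmul b, hxzdef, hp]
      have ha' : a = 1 - b := by linarith
      rw [ha']
      module
    rwa [heq]
  · -- segment p q
    rintro w ⟨a, b, ha, hb, hab, rfl⟩
    have hb1 : b ≤ 1 := by linarith
    have hcond : 2 * δ * (b * (1 - b)) * L ≤ hh := by
      rw [hhh]
      exact hcond_aux hδ hLpos hb hb1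
    have hmem := main b hh hb hb1 hcond le_rfl
    have heq : a • p + b • q =
        z + g.symm ((1 - b) • xh + b • yh + EuclideanSpace.single ed hh) := by
      rw [map_add, map_add, LinearIsometryEquiv.map_smul, LinearIsometryEquiv.map_smul,
        hp, hq, ← hs0]
      have ha' : a = 1 - b := by linarith
      rw [ha']
      module
    rwa [heq]
  · -- segment q y
    rintro w ⟨a, b, ha, hb, hab, rfl⟩
    have ha1 : a ≤ 1 := by linarith
    have hc1 : 2 * δ * (1 * (1 - 1)) * L ≤ a * hh := by
      rw [show 2 * δ * (1 * (1 - (1:ℝ))) * L = 0 by ring]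
      exact mul_nonneg ha hhpos.le
    have hc2 : a * hh ≤ hh := by
      calc a * hh ≤ 1 * hh := mul_le_mul_of_nonneg_right ha1 hhpos.le
        _ = hh := one_mul hh
    have hmem := main 1 (a * hh) zero_le_one le_rfl hc1 hc2
    simp only [sub_self, zero_smul, one_smul, zero_add] at hmem
    have heq : a • q + b • y = z + g.symm (yh + EuclideanSpace.single ed (a * hh)) := by
      rw [map_add, hαsmul a, hq, hyzdef]
      have hb' : b = 1 - a := by linarith
      rw [hb']
      module
    rwa [heq]
  · -- lengths
    have hs0norm : ‖s0‖ = hh := by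
      rw [hs0, g.symm.norm_map, EuclideanSpace.norm_single, Real.norm_eq_abs,
        abs_of_nonneg hhpos.le]
    have e1 : ‖x - p‖ = hh := by
      rw [hp, hxzdef]
      have : z + g.symm xh - (z + g.symm xh + s0) = -s0 := by abel
      rw [this, norm_neg, hs0norm]
    have e2 : ‖p - q‖ = L := by
      rw [hp, hq]
      have : z + g.symm xh + s0 - (z + g.symm yh + s0) = g.symm xh - g.symm yh := by abel
      rw [this, ← map_sub, g.symm.norm_map, hxy']
    have e3 : ‖q - y‖ = hh := by
      rw [hq, hyzdef]
      have : z + g.symm yh + s0 - (z + g.symm yh) = s0 := by abel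
      rw [this, hs0norm]
    rw [e1, e2, e3, hhh]
    have : (1 + δ) * L + L + (1 + δ) * L = (3 + 2 * δ) * L := by ring
    linarith

end Geom

/-- composition of Hölder functions.  If `Ω₁, Ω₂ ⊂ ℝ^d` are bounded Lipschitz
domains, `f₁ : Ω₁ → Ω₂` is bi-Lipschitz with components in `C^s(Ω₁)` and `f₂ ∈ C^s(Ω₂)`,
then `f₂ ∘ f₁ ∈ C^s(Ω₁)`, where `s = k + σ > 1` is non-integer. -/
theorem statement12 (d : ℕ) (hd : 0 < d) (k : ℕ) (hk : 1 ≤ k)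
    (σ : ℝ) (hσ0 : 0 < σ) (hσ1 : σ < 1)
    (Ω₁ Ω₂ : Set (EuclideanSpace ℝ (Fin d)))
    (hΩ₁ : ∃ δ R : ℝ, 0 < δ ∧ 0 < R ∧ IsLipDomainD hd δ R Ω₁)
    (hΩ₂ : ∃ δ R : ℝ, 0 < δ ∧ 0 < R ∧ IsLipDomainD hd δ R Ω₂)
    (f₁ : EuclideanSpace ℝ (Fin d) → EuclideanSpace ℝ (Fin d))
    (f₂ : EuclideanSpace ℝ (Fin d) → ℂ)
    (hmaps : Set.MapsTo f₁ Ω₁ Ω₂)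
    (hbil : ∃ c C : ℝ, 0 < c ∧ c ≤ C ∧ ∀ x ∈ Ω₁, ∀ y ∈ Ω₁,
      c * ‖x - y‖ ≤ ‖f₁ x - f₁ y‖ ∧ ‖f₁ x - f₁ y‖ ≤ C * ‖x - y‖)
    (hf₁ : ∀ i : Fin d, MemHolderCs k σ Ω₁ (fun x => f₁ x i))
    (hf₂ : MemHolderCs k σ Ω₂ f₂) :
    MemHolderCs k σ Ω₁ (f₂ ∘ f₁) := by
  obtain ⟨δ₁, R₁, hδ₁, hR₁, hLD₁⟩ := hΩ₁
  obtain ⟨δ₂, R₂, hδ₂, hR₂, hLD₂⟩ := hΩ₂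
  obtain ⟨ε₁, K₁, hε₁, hK₁, hseg₁⟩ := lipdomain_segprop hd hδ₁ hR₁ hLD₁
  obtain ⟨ε₂, K₂, hε₂, hK₂, hseg₂⟩ := lipdomain_segprop hd hδ₂ hR₂ hLD₂
  have hU : IsOpen Ω₁ := hLD₁.1
  have hV : IsOpen Ω₂ := hLD₂.1
  obtain ⟨c, C, hc, hcC, hbil'⟩ := hbil
  have hC0 : (0:ℝ) ≤ C := le_trans hc.le hcC
  have hlip : ∀ x ∈ Ω₁, ∀ y ∈ Ω₁, ‖f₁ x - f₁ y‖ ≤ C * ‖x - y‖ :=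
    fun x hx y hy => (hbil' x hx y hy).2
  have hcompS : ∀ i : Fin d, SHol k σ Ω₁ (fun x => f₁ x i) := fun i =>
    shol_of_memHolder hU hε₁ (le_trans zero_le_one hK₁) hseg₁ hσ0 hσ1.le (hf₁ i)
  have hf₁S : SHol k σ Ω₁ f₁ := by
    have hsum : SHol k σ Ω₁
        (fun x => ∑ i : Fin d, (f₁ x i) • (EuclideanSpace.single i (1:ℝ))) := by
      refine shol_sum hU.uniqueDiffOn Finset.univ _ (fun i _ => ?_)
      have hclm := shol_clm hU.uniqueDiffOn
        (ContinuousLinearMap.toSpanSingleton ℝ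
          (EuclideanSpace.single i (1:ℝ) : EuclideanSpace ℝ (Fin d))) (hcompS i)
      simpa only [ContinuousLinearMap.toSpanSingleton_apply] using hclm
    refine shol_congr (fun x _ => ?_) hsum
    show (∑ i : Fin d, (f₁ x i) • (EuclideanSpace.single i (1:ℝ))) = f₁ x
    ext j
    rw [show (∑ i, (f₁ x i) • EuclideanSpace.single i (1:ℝ)) j
        = ∑ i, ((f₁ x i) • EuclideanSpace.single i (1:ℝ)) j from by rw [WithLp.ofLp_sum, Finset.sum_apply]]
    simp [EuclideanSpace.single_apply]
  have hf₂S : SHol k σ Ω₂ f₂ :=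
    shol_of_memHolder hV hε₂ (le_trans zero_le_one hK₂) hseg₂ hσ0 hσ1.le hf₂
  have hres := shol_comp hσ0 hU hV hmaps hC0 hlip k hf₁S k le_rfl f₂ hf₂S
  exact ⟨hres.1, fun i hi => (hres.2 i hi).1, (hres.2 k le_rfl).2⟩
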